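/- Special integral technique of Theorem 5: let Z be a real-valued random variable on a probability space with Z > 0 almost surely. Then E[ln(1 + 1/Z)] = ∫₀^∞ s^{−1} (1 − e^{−s}) · E[e^{−s Z}] ds, where both sides may simultaneously be infinite. -/

import Mathlib

open MeasureTheory Set

/-- `∫₀^∞ e^{-as} ds = 1/a` for `a > 0`, as a lower Lebesgue integral. -/
lemma exp_lintegral_Ioi {a : ℝ} (ha : 0 < a) :
    ∫⁻ s in Ioi (0 : ℝ), ENNReal.ofReal (Real.exp (-(a * s))) = ENNReal.ofReal a⁻¹ := by
  have hint : IntegrableOn (fun s : ℝ => Real.exp (-(a * s))) (Ioi 0) := by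
    simpa [neg_mul] using exp_neg_integrableOn_Ioi 0 ha
  rw [← ofReal_integral_eq_lintegral_ofReal hint
      (Filter.Eventually.of_forall fun s => (Real.exp_pos _).le)]
  congr 1
  have := integral_comp_mul_left_Ioi (fun u : ℝ => Real.exp (-u)) 0 ha
  simp only [mul_zero, smul_eq_mul] at this
  rw [this, integral_exp_neg_Ioi, neg_zero, Real.exp_zero, mul_one]

/-- `∫₀¹ e^{-s(t+z)} dt = s⁻¹ (1-e^{-s}) e^{-sz}` for `s > 0`. -/
lemma exp_interval_integral {s z : ℝ} (hs : 0 < s) :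
    ∫ t in (0:ℝ)..1, Real.exp (-(s * (t + z))) =
      s⁻¹ * (1 - Real.exp (-s)) * Real.exp (-(s * z)) := by
  have hD : ∀ t ∈ uIcc (0:ℝ) 1,
      HasDerivAt (fun t : ℝ => -(Real.exp (-(s * (t + z)))) / s)
        (Real.exp (-(s * (t + z)))) t := by
    intro t _
    have h1 : HasDerivAt (fun t : ℝ => -(s * (t + z))) (-s) t := by
      exact (by simpa using (((hasDerivAt_id t).add_const z).const_mul s).neg :
        HasDerivAt (-fun y : ℝ => s * (y + z)) (-s) t)
    have h2 := (h1.exp).neg.div_const s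
    refine h2.congr_deriv ?_
    rw [div_eq_iff hs.ne']; ring
  have hC : IntervalIntegrable (fun t : ℝ => Real.exp (-(s * (t + z)))) MeasureTheory.volume 0 1 :=
    (Real.continuous_exp.comp (by continuity)).intervalIntegrable 0 1
  rw [intervalIntegral.integral_eq_sub_of_hasDerivAt hD hC]
  have : Real.exp (-(s * (1 + z))) = Real.exp (-s) * Real.exp (-(s * z)) := by
    rw [← Real.exp_add]; ring_nf
  simp only [zero_add, this]
  ring

/-- Pointwise Frullani-type identity: for `z > 0`,
`∫₀^∞ s⁻¹ (1-e^{-s}) e^{-sz} ds = ln(1 + 1/z)`. -/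
lemma frullani_lintegral {z : ℝ} (hz : 0 < z) :
    ∫⁻ s in Ioi (0 : ℝ),
        ENNReal.ofReal (s⁻¹ * (1 - Real.exp (-s)) * Real.exp (-(s * z))) =
      ENNReal.ofReal (Real.log (1 + 1 / z)) := by
  have key : ∀ s ∈ Ioi (0:ℝ),
      ENNReal.ofReal (s⁻¹ * (1 - Real.exp (-s)) * Real.exp (-(s * z))) =
        ∫⁻ t in Ioo (0:ℝ) 1, ENNReal.ofReal (Real.exp (-(s * (t + z)))) := by
    intro s hs
    have hs' : 0 < s := hs
    have hint : IntegrableOn (fun t : ℝ => Real.exp (-(s * (t + z)))) (Ioo 0 1) :=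
      ((Real.continuous_exp.comp (by continuity)).integrableOn_Icc (a := 0) (b := 1)).mono_set
        Ioo_subset_Icc_self
    rw [← ofReal_integral_eq_lintegral_ofReal hint
        (Filter.Eventually.of_forall fun t => (Real.exp_pos _).le)]
    congr 1
    rw [← integral_Ioc_eq_integral_Ioo, ← intervalIntegral.integral_of_le (by norm_num : (0:ℝ) ≤ 1)]
    exact (exp_interval_integral hs').symm
  rw [setLIntegral_congr_fun measurableSet_Ioi key]
  have hmeas : Measurable (Function.uncurry fun s t : ℝ =>
      ENNReal.ofReal (Real.exp (-(s * (t + z))))) := by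
    apply ENNReal.measurable_ofReal.comp
    exact Real.measurable_exp.comp
      ((measurable_fst.mul (measurable_snd.add measurable_const)).neg)
  rw [lintegral_lintegral_swap hmeas.aemeasurable]
  have key2 : ∀ t ∈ Ioo (0:ℝ) 1,
      (∫⁻ s in Ioi (0:ℝ), ENNReal.ofReal (Real.exp (-(s * (t + z))))) =
        ENNReal.ofReal (t + z)⁻¹ := by
    intro t ht
    have htz : 0 < t + z := by linarith [ht.1]
    rw [← exp_lintegral_Ioi htz]
    congr 1 with s
    rw [mul_comm]
  rw [setLIntegral_congr_fun measurableSet_Ioo key2]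
  have hint2 : IntegrableOn (fun t : ℝ => (t + z)⁻¹) (Ioo 0 1) := by
    refine (ContinuousOn.integrableOn_Icc ?_).mono_set Ioo_subset_Icc_self
    intro t ht
    have : t + z ≠ 0 := by have := ht.1; positivity
    exact (continuousAt_id.add continuousAt_const).continuousWithinAt.inv₀ this
  rw [← ofReal_integral_eq_lintegral_ofReal hint2
      (ae_restrict_of_forall_mem measurableSet_Ioo fun t ht => by
        have : 0 < t + z := by linarith [ht.1]
        positivity)]
  congr 1
  rw [← integral_Ioc_eq_integral_Ioo, ← intervalIntegral.integral_of_le (by norm_num : (0:ℝ) ≤ 1)]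
  rw [intervalIntegral.integral_comp_add_right (fun u : ℝ => u⁻¹) z, zero_add,
    integral_inv_of_pos hz (by linarith)]
  congr 1
  field_simp
  ring

theorem special_integral_technique {Ω : Type*} [MeasurableSpace Ω]
    (P : Measure Ω) [IsProbabilityMeasure P]
    (Z : Ω → ℝ) (hZm : Measurable Z) (hZ : ∀ᵐ ω ∂P, 0 < Z ω) :
    ∫⁻ ω, ENNReal.ofReal (Real.log (1 + 1 / Z ω)) ∂P =
      ∫⁻ s in Ioi (0 : ℝ), ENNReal.ofReal (s⁻¹ * (1 - Real.exp (-s))) *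
        ∫⁻ ω, ENNReal.ofReal (Real.exp (-s * Z ω)) ∂P := by
  -- rewrite the RHS integrand: pull the constant inside the inner integral
  have step1 : ∀ s ∈ Ioi (0:ℝ),
      (ENNReal.ofReal (s⁻¹ * (1 - Real.exp (-s))) *
        ∫⁻ ω, ENNReal.ofReal (Real.exp (-s * Z ω)) ∂P) =
      ∫⁻ ω, ENNReal.ofReal (s⁻¹ * (1 - Real.exp (-s)) * Real.exp (-(s * Z ω))) ∂P := by
    intro s hs
    have hs' : (0:ℝ) < s := hs
    rw [← lintegral_const_mul' _ _ ENNReal.ofReal_ne_top]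
    congr 1 with ω
    rw [← ENNReal.ofReal_mul (by
      have h1 : Real.exp (-s) ≤ 1 := Real.exp_le_one_iff.mpr (by linarith)
      have : (0:ℝ) ≤ s⁻¹ := by positivity
      nlinarith)]
    ring_nf
  rw [setLIntegral_congr_fun measurableSet_Ioi step1]
  have hmeas : Measurable (Function.uncurry fun (s : ℝ) (ω : Ω) =>
      ENNReal.ofReal (s⁻¹ * (1 - Real.exp (-s)) * Real.exp (-(s * Z ω)))) := by
    apply ENNReal.measurable_ofReal.comp
    apply Measurable.mul
    · exact ((measurable_fst.inv).mul
        (measurable_const.sub (Real.measurable_exp.comp measurable_fst.neg)))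
    · exact Real.measurable_exp.comp ((measurable_fst.mul (hZm.comp measurable_snd)).neg)
  rw [lintegral_lintegral_swap hmeas.aemeasurable]
  refine (lintegral_congr_ae ?_).symm
  filter_upwards [hZ] with ω hω
  exact frullani_lintegral hω
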